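/- Let S be a random m×n real matrix and ε, δ ∈ (0,1). If S has the strong (ε,δ)-JL moment property, then for any positive integers a and b, the random matrix M = I_a ⊗ S ⊗ I_b (Kronecker product with identity matrices) also has the strong (ε,δ)-JL moment property: for every unit vector y ∈ ℝ^{a·n·b} and every integer p with 2 ≤ p ≤ log(1/δ), E|‖My‖₂² − 1|^p ≤ (ε/e)^p·(p/log(1/δ))^{p/2} and E‖My‖₂² = 1. -/

import Mathlib

open MeasureTheory ProbabilityTheory Matrix Kronecker

/-- The squared Euclidean norm of a finitely-indexed real vector. -/
noncomputable def sqNorm {ι : Type*} [Fintype ι] (v : ι → ℝ) : ℝ := ∑ i, v i ^ 2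

/-- A random matrix `S` has the strong `(ε,δ)`-JL moment property if for every unit vector `x`
and every integer `2 ≤ p ≤ log(1/δ)`,
`E|‖Sx‖₂² − 1|^p ≤ (ε/e)^p·(p/log(1/δ))^{p/2}`, and `E‖Sx‖₂² = 1`. -/
def HasStrongJL {Ω : Type*} [MeasurableSpace Ω] (μ : Measure Ω)
    {ι κ : Type*} [Fintype ι] [Fintype κ] (S : Ω → Matrix ι κ ℝ) (ε δ : ℝ) : Prop :=
  ∀ x : κ → ℝ, sqNorm x = 1 →
    (∀ p : ℕ, 2 ≤ p → (p : ℝ) ≤ Real.log (1 / δ) →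
      (∫ ω, |sqNorm (S ω *ᵥ x) - 1| ^ p ∂μ) ≤
        (ε / Real.exp 1) ^ p * ((p : ℝ) / Real.log (1 / δ)) ^ ((p : ℝ) / 2)) ∧
    (∫ ω, sqNorm (S ω *ᵥ x) ∂μ) = 1

lemma sqNorm_nonneg {ι : Type*} [Fintype ι] (v : ι → ℝ) : 0 ≤ sqNorm v :=
  Finset.sum_nonneg fun _ _ => sq_nonneg _

lemma sqNorm_smul {ι : Type*} [Fintype ι] (c : ℝ) (v : ι → ℝ) :
    sqNorm (c • v) = c ^ 2 * sqNorm v := by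
  simp [sqNorm, Finset.mul_sum, mul_pow]

lemma aux_add_one_pow (x : ℝ) (hx : 0 ≤ x) (p : ℕ) : (x + 1) ^ p ≤ 2 ^ p * (x ^ p + 1) := by
  have h1 : x + 1 ≤ 2 * max x 1 := by
    rcases le_total x 1 with h | h
    · simp [max_eq_right h]; nlinarith
    · simp [max_eq_left h]; nlinarith
  have h2 : (max x 1) ^ p ≤ x ^ p + 1 := by
    rcases le_total x 1 with h | h
    · calc (max x 1) ^ p = 1 := by rw [max_eq_right h, one_pow]
        _ ≤ x ^ p + 1 := by nlinarith [pow_nonneg hx p]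
    · calc (max x 1) ^ p = x ^ p := by rw [max_eq_left h]
        _ ≤ x ^ p + 1 := by linarith
  calc (x + 1) ^ p ≤ (2 * max x 1) ^ p := by
        apply pow_le_pow_left₀ (by linarith) h1
    _ = 2 ^ p * (max x 1) ^ p := mul_pow _ _ _
    _ ≤ 2 ^ p * (x ^ p + 1) := by
        apply mul_le_mul_of_nonneg_left h2 (by positivity)

set_option maxHeartbeats 1000000 in
/-- If a random `m×n` matrix `S` has the strong `(ε,δ)`-JL moment property,
then for any positive integers `a, b`, the random matrix `M = I_a ⊗ S ⊗ I_b` also has the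
strong `(ε,δ)`-JL moment property. -/
theorem strongJL_kronecker_id
    {Ω : Type*} [MeasurableSpace Ω] (μ : Measure Ω) [IsProbabilityMeasure μ]
    {m n : ℕ} (S : Ω → Matrix (Fin m) (Fin n) ℝ) (ε δ : ℝ)
    (hε : ε ∈ Set.Ioo (0 : ℝ) 1) (hδ : δ ∈ Set.Ioo (0 : ℝ) 1)
    (h : HasStrongJL μ S ε δ)
    (a b : ℕ) (ha : 0 < a) (hb : 0 < b) :
    HasStrongJL μ
      (fun ω => ((1 : Matrix (Fin a) (Fin a) ℝ) ⊗ₖ S ω) ⊗ₖ (1 : Matrix (Fin b) (Fin b) ℝ))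
      ε δ := by
  intro y hy
  have hL : 0 < Real.log (1 / δ) := Real.log_pos (one_lt_one_div hδ.1 hδ.2)
  set v : Fin a × Fin b → Fin n → ℝ := fun ij c => y ((ij.1, c), ij.2) with hv
  set w : Fin a × Fin b → ℝ := fun ij => sqNorm (v ij) with hwdef
  have hw0 : ∀ ij, 0 ≤ w ij := fun ij => sqNorm_nonneg _
  have hw1 : ∑ ij : Fin a × Fin b, w ij = 1 := by
    rw [← hy]
    simp only [sqNorm, Fintype.sum_prod_type, hwdef, hv]
    exact (Finset.sum_congr rfl fun i _ => Finset.sum_comm).symm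
  -- normalized vectors and the scalar processes
  set Z : Fin a × Fin b → Ω → ℝ := fun ij ω =>
    if w ij = 0 then 1 else sqNorm (S ω *ᵥ ((Real.sqrt (w ij))⁻¹ • v ij)) with hZdef
  have hZnn : ∀ ij ω, 0 ≤ Z ij ω := by
    intro ij ω
    simp only [hZdef]
    split
    · norm_num
    · exact sqNorm_nonneg _
  have hZspec : ∀ ij, Integrable (Z ij) μ ∧ (∫ ω, Z ij ω ∂μ) = 1 ∧
      ∀ p : ℕ, 2 ≤ p → (p : ℝ) ≤ Real.log (1 / δ) →
        (∫ ω, |Z ij ω - 1| ^ p ∂μ) ≤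
          (ε / Real.exp 1) ^ p * ((p : ℝ) / Real.log (1 / δ)) ^ ((p : ℝ) / 2) := by
    intro ij
    by_cases hwz : w ij = 0
    · have hZ1 : Z ij = fun _ => (1 : ℝ) := by
        funext ω; simp only [hZdef, if_pos hwz]
      refine ⟨?_, ?_, ?_⟩
      · rw [hZ1]; exact integrable_const 1
      · rw [hZ1]; simp
      · intro p hp2 hpL
        have hz : (fun ω : Ω => |Z ij ω - 1| ^ p) = fun _ => 0 := by
          funext ω
          rw [hZ1, sub_self, abs_zero, zero_pow (by omega : p ≠ 0)]
        rw [show (∫ ω, |Z ij ω - 1| ^ p ∂μ) = ∫ _ω, (0:ℝ) ∂μ from by rw [← hz],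
          integral_zero]
        exact mul_nonneg (pow_nonneg (div_nonneg hε.1.le (Real.exp_pos 1).le) p)
          (Real.rpow_nonneg (div_nonneg (Nat.cast_nonneg p) hL.le) _)
    · have hwpos : 0 < w ij := lt_of_le_of_ne (hw0 ij) (Ne.symm hwz)
      have hu : sqNorm ((Real.sqrt (w ij))⁻¹ • v ij) = 1 := by
        rw [sqNorm_smul, inv_pow, Real.sq_sqrt (hw0 ij)]
        field_simp
        rfl
      obtain ⟨hmom, hmean⟩ := h _ hu
      have hint : Integrable (Z ij) μ := by
        by_contra hni
        have h0 : (∫ ω, Z ij ω ∂μ) = 0 := integral_undef hni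
        have h1 : (∫ ω, Z ij ω ∂μ) = 1 := by
          simp only [hZdef, if_neg hwz]; exact hmean
        rw [h0] at h1; norm_num at h1
      refine ⟨hint, ?_, ?_⟩
      · simp only [hZdef, if_neg hwz]; exact hmean
      · intro p hp2 hpL
        simp only [hZdef, if_neg hwz]
        exact hmom p hp2 hpL
  -- key pointwise identity
  have hterm : ∀ ω ij, sqNorm (S ω *ᵥ v ij) = w ij * Z ij ω := by
    intro ω ij
    by_cases hwz : w ij = 0
    · have hv0 : v ij = 0 := by
        funext c
        have : ∑ c, v ij c ^ 2 = 0 := hwz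
        have hc := (Finset.sum_eq_zero_iff_of_nonneg (fun c _ => sq_nonneg (v ij c))).mp this
          c (Finset.mem_univ c)
        exact pow_eq_zero_iff (by norm_num) |>.mp hc
      simp [hwz, hv0, sqNorm, Matrix.mulVec_zero]
    · simp only [hZdef, if_neg hwz]
      rw [Matrix.mulVec_smul, sqNorm_smul, inv_pow, Real.sq_sqrt (hw0 ij)]
      field_simp
  have hkey : ∀ ω, sqNorm
      ((((1 : Matrix (Fin a) (Fin a) ℝ) ⊗ₖ S ω) ⊗ₖ (1 : Matrix (Fin b) (Fin b) ℝ)) *ᵥ y)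
      = ∑ ij : Fin a × Fin b, w ij * Z ij ω := by
    intro ω
    have hmv : ∀ q : (Fin a × Fin m) × Fin b,
        ((((1 : Matrix (Fin a) (Fin a) ℝ) ⊗ₖ S ω) ⊗ₖ (1 : Matrix (Fin b) (Fin b) ℝ)) *ᵥ y) q
          = (S ω *ᵥ v (q.1.1, q.2)) q.1.2 := by
      intro ⟨⟨i, r⟩, j⟩
      simp [mulVec, dotProduct, Matrix.one_apply, Fintype.sum_prod_type, ite_mul, mul_ite,
        Finset.sum_ite_eq, Finset.sum_ite_eq', hv]
    calc sqNorm ((((1 : Matrix (Fin a) (Fin a) ℝ) ⊗ₖ S ω) ⊗ₖ (1 : Matrix (Fin b) (Fin b) ℝ)) *ᵥ y)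
        = ∑ q : (Fin a × Fin m) × Fin b, ((S ω *ᵥ v (q.1.1, q.2)) q.1.2) ^ 2 := by
          unfold sqNorm; exact Finset.sum_congr rfl fun q _ => by rw [hmv q]
      _ = ∑ ij : Fin a × Fin b, sqNorm (S ω *ᵥ v ij) := by
          simp only [Fintype.sum_prod_type, sqNorm]
          exact Finset.sum_congr rfl fun i _ => Finset.sum_comm
      _ = ∑ ij : Fin a × Fin b, w ij * Z ij ω :=
          Finset.sum_congr rfl fun ij _ => hterm ω ij
  constructor
  · -- moment bounds
    intro p hp2 hpL
    have hB : 0 ≤ (ε / Real.exp 1) ^ p * ((p : ℝ) / Real.log (1 / δ)) ^ ((p : ℝ) / 2) := by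
      have h1 : (0:ℝ) ≤ (ε / Real.exp 1) ^ p :=
        pow_nonneg (div_nonneg hε.1.le (Real.exp_pos 1).le) p
      have h2 : (0:ℝ) ≤ ((p : ℝ) / Real.log (1 / δ)) ^ ((p : ℝ) / 2) :=
        Real.rpow_nonneg (by positivity) _
      exact mul_nonneg h1 h2
    simp_rw [hkey]
    by_cases hint : Integrable (fun ω => |∑ ij : Fin a × Fin b, w ij * Z ij ω - 1| ^ p) μ
    · -- each |Z ij - 1|^p is integrable
      have hfint : ∀ ij, Integrable (fun ω => |Z ij ω - 1| ^ p) μ := by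
        intro ij
        by_cases hwz : w ij = 0
        · have : (fun ω => |Z ij ω - 1| ^ p) = fun _ => 0 := by
            funext ω
            simp only [hZdef, if_pos hwz]
            simp; omega
          rw [this]; exact integrable_const 0
        · have hwpos : 0 < w ij := lt_of_le_of_ne (hw0 ij) (Ne.symm hwz)
          set C : ℝ := ((w ij)⁻¹ + 1) ^ p * 2 ^ p with hC
          have hCnn : 0 ≤ C := by positivity
          have hgint : Integrable
              (fun ω => C * (|∑ ij : Fin a × Fin b, w ij * Z ij ω - 1| ^ p + 1)) μ :=
            ((hint.add (integrable_const 1)).const_mul C)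
          have hasm : AEStronglyMeasurable (fun ω => |Z ij ω - 1| ^ p) μ := by
            have h1 : AEMeasurable (Z ij) μ := (hZspec ij).1.aemeasurable
            have hcont : Continuous fun t : ℝ => |t - 1| ^ p :=
              ((continuous_abs.comp (continuous_id.sub continuous_const)).pow p)
            exact (hcont.measurable.comp_aemeasurable h1).aestronglyMeasurable
          refine hgint.mono hasm (Filter.Eventually.of_forall fun ω => ?_)
          have hWnn : (0:ℝ) ≤ ∑ ij : Fin a × Fin b, w ij * Z ij ω :=
            Finset.sum_nonneg fun ij _ => mul_nonneg (hw0 ij) (hZnn ij ω)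
          set Wa : ℝ := |∑ ij : Fin a × Fin b, w ij * Z ij ω - 1| with hWa
          have hWann : 0 ≤ Wa := abs_nonneg _
          have hsingle : w ij * Z ij ω ≤ ∑ ij : Fin a × Fin b, w ij * Z ij ω :=
            Finset.single_le_sum (fun k _ => mul_nonneg (hw0 k) (hZnn k ω)) (Finset.mem_univ ij)
          have hZle : Z ij ω ≤ (w ij)⁻¹ * (Wa + 1) := by
            have h1 : ∑ k : Fin a × Fin b, w k * Z k ω ≤ Wa + 1 := by
              have := le_abs_self (∑ k : Fin a × Fin b, w k * Z k ω - 1)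
              simp only [hWa]; linarith
            have h2 : w ij * Z ij ω ≤ Wa + 1 := le_trans hsingle h1
            rw [inv_mul_eq_div, le_div_iff₀ hwpos, mul_comm]
            exact h2
          have habs : |Z ij ω - 1| ≤ ((w ij)⁻¹ + 1) * (Wa + 1) := by
            have h1 : |Z ij ω - 1| ≤ Z ij ω + 1 := by
              rw [abs_sub_le_iff]
              constructor <;> nlinarith [hZnn ij ω]
            have h2 : Z ij ω + 1 ≤ (w ij)⁻¹ * (Wa + 1) + 1 := by linarith
            have h3 : (w ij)⁻¹ * (Wa + 1) + 1 ≤ ((w ij)⁻¹ + 1) * (Wa + 1) := by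
              nlinarith [inv_nonneg.mpr (hw0 ij)]
            linarith
          have hpow : |Z ij ω - 1| ^ p ≤ C * (Wa ^ p + 1) := by
            calc |Z ij ω - 1| ^ p ≤ (((w ij)⁻¹ + 1) * (Wa + 1)) ^ p :=
                  pow_le_pow_left₀ (abs_nonneg _) habs p
              _ = ((w ij)⁻¹ + 1) ^ p * (Wa + 1) ^ p := mul_pow _ _ _
              _ ≤ ((w ij)⁻¹ + 1) ^ p * (2 ^ p * (Wa ^ p + 1)) := by
                  apply mul_le_mul_of_nonneg_left (aux_add_one_pow Wa hWann p) (by positivity)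
              _ = C * (Wa ^ p + 1) := by rw [hC]; ring
          have hrhs : (0:ℝ) ≤ C * (Wa ^ p + 1) :=
            mul_nonneg hCnn (add_nonneg (pow_nonneg hWann p) zero_le_one)
          rw [Real.norm_eq_abs, Real.norm_eq_abs, abs_pow, abs_abs, abs_of_nonneg hrhs]
          exact hpow
      -- pointwise Jensen
      have hpt : ∀ ω, |∑ ij : Fin a × Fin b, w ij * Z ij ω - 1| ^ p
          ≤ ∑ ij : Fin a × Fin b, w ij * |Z ij ω - 1| ^ p := by
        intro ω
        have h0 : ∑ ij : Fin a × Fin b, w ij * Z ij ω - 1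
            = ∑ ij : Fin a × Fin b, w ij * (Z ij ω - 1) := by
          simp only [mul_sub, mul_one, Finset.sum_sub_distrib, hw1]
        have h1 : |∑ ij : Fin a × Fin b, w ij * (Z ij ω - 1)|
            ≤ ∑ ij : Fin a × Fin b, w ij * |Z ij ω - 1| := by
          refine le_trans (Finset.abs_sum_le_sum_abs _ _) ?_
          exact Finset.sum_le_sum fun ij _ => by
            rw [abs_mul, abs_of_nonneg (hw0 ij)]
        calc |∑ ij : Fin a × Fin b, w ij * Z ij ω - 1| ^ p
            ≤ (∑ ij : Fin a × Fin b, w ij * |Z ij ω - 1|) ^ p := by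
              rw [h0]; exact pow_le_pow_left₀ (abs_nonneg _) h1 p
          _ ≤ ∑ ij : Fin a × Fin b, w ij * |Z ij ω - 1| ^ p :=
              Real.pow_arith_mean_le_arith_mean_pow Finset.univ w _
                (fun ij _ => hw0 ij) hw1 (fun ij _ => abs_nonneg _) p
      calc (∫ ω, |∑ ij : Fin a × Fin b, w ij * Z ij ω - 1| ^ p ∂μ)
          ≤ ∫ ω, ∑ ij : Fin a × Fin b, w ij * |Z ij ω - 1| ^ p ∂μ :=
            integral_mono hint
              (integrable_finset_sum _ fun ij _ => (hfint ij).const_mul _) hpt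
        _ = ∑ ij : Fin a × Fin b, w ij * ∫ ω, |Z ij ω - 1| ^ p ∂μ := by
            rw [integral_finset_sum _ fun ij _ => (hfint ij).const_mul _]
            exact Finset.sum_congr rfl fun ij _ => integral_const_mul _ _
        _ ≤ ∑ ij : Fin a × Fin b, w ij *
              ((ε / Real.exp 1) ^ p * ((p : ℝ) / Real.log (1 / δ)) ^ ((p : ℝ) / 2)) :=
            Finset.sum_le_sum fun ij _ =>
              mul_le_mul_of_nonneg_left ((hZspec ij).2.2 p hp2 hpL) (hw0 ij)
        _ = (ε / Real.exp 1) ^ p * ((p : ℝ) / Real.log (1 / δ)) ^ ((p : ℝ) / 2) := by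
            rw [← Finset.sum_mul, hw1, one_mul]
    · rw [integral_undef hint]
      exact hB
  · -- mean one
    simp_rw [hkey]
    rw [integral_finset_sum _ fun ij _ => ((hZspec ij).1.const_mul _)]
    calc ∑ ij : Fin a × Fin b, ∫ ω, w ij * Z ij ω ∂μ
        = ∑ ij : Fin a × Fin b, w ij * ∫ ω, Z ij ω ∂μ :=
          Finset.sum_congr rfl fun ij _ => integral_const_mul _ _
      _ = ∑ ij : Fin a × Fin b, w ij := by
          exact Finset.sum_congr rfl fun ij _ => by rw [(hZspec ij).2.1, mul_one]
      _ = 1 := hw1
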